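/- The final approximate value satisfies |DP_n − D̃P_n| ≤ ε. -/
import Mathlib

lemma abs_inf'_sub_inf'_le {s : Finset ℕ} (h : s.Nonempty) {f g : ℕ → ℝ} {δ : ℝ}
    (hfg : ∀ x ∈ s, |f x - g x| ≤ δ) : |s.inf' h f - s.inf' h g| ≤ δ := by
  rw [abs_sub_le_iff]
  constructor
  · obtain ⟨x, hx, hgx⟩ := s.exists_mem_eq_inf' h g
    have h2 := abs_sub_le_iff.mp (hfg x hx)
    have h1 := Finset.inf'_le f hx
    rw [hgx]; linarith [h2.1]
  · obtain ⟨x, hx, hfx⟩ := s.exists_mem_eq_inf' h f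
    have h2 := abs_sub_le_iff.mp (hfg x hx)
    have h1 := Finset.inf'_le g hx
    rw [hfx]; linarith [h2.2]

/-- Under the step-wise error assumption, the final approximate value satisfies
`|DP n − D̃P n| ≤ ε`. -/
theorem stmt4 (n : ℕ) (hn : 1 ≤ n) (P : ℕ → ℝ) (C : ℝ) (hC : 0 ≤ C)
    (ε : ℝ) (hε : 0 < ε)
    (S : ℕ → ℝ) (hS : ∀ i, S i = ∑ m ∈ Finset.Icc 1 i, P m)
    (wt : ℕ → ℕ → ℝ)
    (hwt : ∀ j i : ℕ, j < i → i ≤ n → wt j i = -(S i - S j) ^ 2 / ((i : ℝ) - j) + C)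
    (DP : ℕ → ℝ) (hDP0 : DP 0 = 0)
    (hDP : ∀ i, ∀ hi : 1 ≤ i, i ≤ n →
      DP i = (Finset.range i).inf' (Finset.nonempty_range_iff.mpr (by omega))
        (fun j => DP j + wt j i))
    (DPt : ℕ → ℝ) (hDPt0 : DPt 0 = 0)
    (hDPt : ∀ i, ∀ hi : 1 ≤ i, i ≤ n →
      |(Finset.range i).inf' (Finset.nonempty_range_iff.mpr (by omega))
          (fun j => DPt j + wt j i) - DPt i| ≤ ε / n) :
    |DP n - DPt n| ≤ ε := by
  have hδ : 0 ≤ ε / n := by positivity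
  have main : ∀ i, i ≤ n → |DP i - DPt i| ≤ i * (ε / n) := by
    intro i
    induction i using Nat.strong_induction_on with
    | _ i ih =>
      intro hin
      rcases Nat.eq_zero_or_pos i with h0 | h1
      · subst h0; simp [hDP0, hDPt0]
      · have hne : (Finset.range i).Nonempty := Finset.nonempty_range_iff.mpr (by omega)
        have hDPi := hDP i h1 hin
        have hDPti := hDPt i h1 hin
        have hinf : |(Finset.range i).inf' hne (fun j => DP j + wt j i)
            - (Finset.range i).inf' hne (fun j => DPt j + wt j i)|
            ≤ ((i - 1 : ℕ) : ℝ) * (ε / n) := by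
          apply abs_inf'_sub_inf'_le
          intro x hx
          have hxi : x < i := Finset.mem_range.mp hx
          have := ih x hxi (by omega)
          have hx1 : (x : ℝ) ≤ ((i - 1 : ℕ) : ℝ) := by exact_mod_cast Nat.le_pred_of_lt hxi
          have : |DP x - DPt x| ≤ ((i - 1 : ℕ) : ℝ) * (ε / n) := by
            refine le_trans this ?_
            exact mul_le_mul_of_nonneg_right hx1 hδ
          calc |DP x + wt x i - (DPt x + wt x i)| = |DP x - DPt x| := by ring_nf
            _ ≤ _ := this
        calc |DP i - DPt i|
            ≤ |DP i - (Finset.range i).inf' hne (fun j => DPt j + wt j i)|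
              + |(Finset.range i).inf' hne (fun j => DPt j + wt j i) - DPt i| :=
              abs_sub_le _ _ _
          _ ≤ ((i - 1 : ℕ) : ℝ) * (ε / n) + ε / n := by
              apply add_le_add
              · rw [hDPi]; exact hinf
              · exact hDPti
          _ ≤ (i : ℝ) * (ε / n) := by
              have : ((i - 1 : ℕ) : ℝ) + 1 ≤ (i : ℝ) := by
                have : (i - 1 : ℕ) + 1 ≤ i := by omega
                exact_mod_cast this
              nlinarith
  have := main n le_rfl
  have hn0 : (n : ℝ) ≠ 0 := by positivity
  calc |DP n - DPt n| ≤ n * (ε / n) := this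
    _ = ε := by field_simp
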